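/- arXiv:2311.01959 — 3 statements merged into one kernel-verified Lean document; each statement's English description precedes it below -/
import Mathlib

section
/- Let A ∈ ℝ^{m×n} with ‖A‖₁ > 0, b ∈ ℝ^m, u ∈ ℝ^n with u ≥ 0, and ĉ ∈ ℝ^n. Then the function τ ↦ F*_τ is non-increasing and continuous on ℝ. Moreover, if the system Ax = b, 0 ≤ x ≤ u is feasible, then Φ(A,b,ĉ,u) = min{τ ∈ ℝ : F*_τ = 0}; that is, the optimal value of LP(A,b,ĉ,u) is the smallest τ for which F*_τ = 0. -/
open BigOperators Finset

noncomputable section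

open Classical

/-- A nonzero `g ∈ W` is an elementary vector of `W` if no nonzero `h ∈ W`
has strictly smaller support. -/
def IsElementaryVec {ι : Type*} (W : Submodule ℝ (ι → ℝ)) (g : ι → ℝ) : Prop :=
  g ∈ W ∧ g ≠ 0 ∧ ∀ h : ι → ℝ, h ∈ W → h ≠ 0 → ¬ ({i | h i ≠ 0} ⊂ {i | g i ≠ 0})

/-- The circuit imbalance measure `κ(W)`: the maximum of `|g j / g i|` over elementary
vectors `g` of `W` and `i, j ∈ supp(g)`, with `κ(W) := 1` for the trivial subspaces. -/
noncomputable def kappaSub {ι : Type*} (W : Submodule ℝ (ι → ℝ)) : ℝ :=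
  if W = ⊥ ∨ W = ⊤ then 1
  else sSup {t : ℝ | ∃ g : ι → ℝ, IsElementaryVec W g ∧
    ∃ i j : ι, g i ≠ 0 ∧ g j ≠ 0 ∧ t = |g j / g i|}

/-- `y` conforms to `x` if `x i * y i > 0` whenever `y i ≠ 0`. -/
def Conforms {ι : Type*} (x y : ι → ℝ) : Prop :=
  ∀ i, y i ≠ 0 → x i * y i > 0

/-- The extended subspace `X_A := ker (A | −I_m) ⊆ ℝ^{n+m}`. -/
noncomputable def XA {m n : ℕ} (A : Matrix (Fin m) (Fin n) ℝ) :
    Submodule ℝ (Fin n ⊕ Fin m → ℝ) :=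
  LinearMap.ker (Matrix.fromCols A (-1)).mulVecLin

/-- The optimal value `Φ(A,b,c,u)` of `LP(A,b,c,u)`:
`min ⟨c,x⟩  s.t.  Ax = b, 0 ≤ x ≤ u`. -/
noncomputable def PhiLP {m : ℕ} {ι : Type*} [Fintype ι] (A : Matrix (Fin m) ι ℝ)
    (b : Fin m → ℝ) (c u : ι → ℝ) : ℝ :=
  sInf {v : ℝ | ∃ x : ι → ℝ, A.mulVec x = b ∧ 0 ≤ x ∧ x ≤ u ∧ v = ∑ i, c i * x i}

/-- `θ(x,π,σ) = Σ_{i : c_i − A_i^⊤π > σ} x_i + Σ_{i : c_i − A_i^⊤π < −σ} (u_i − x_i)`. -/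
noncomputable def thetaLP {m n : ℕ} (A : Matrix (Fin m) (Fin n) ℝ) (c u x : Fin n → ℝ)
    (π : Fin m → ℝ) (σ : ℝ) : ℝ :=
  (∑ i ∈ Finset.univ.filter (fun i => c i - ∑ j, A j i * π j > σ), x i) +
    ∑ i ∈ Finset.univ.filter (fun i => c i - ∑ j, A j i * π j < -σ), (u i - x i)

/-- The potential function
`F_τ(x) = ½(max{0, ⟨ĉ,x⟩ − τ})² + (1/(2‖A‖₁²))‖Ax − b‖₂²`. -/
noncomputable def Ftau {m n : ℕ} (A : Matrix (Fin m) (Fin n) ℝ) (b : Fin m → ℝ)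
    (chat : Fin n → ℝ) (τ : ℝ) (x : Fin n → ℝ) : ℝ :=
  (1 / 2) * (max 0 ((∑ i, chat i * x i) - τ)) ^ 2 +
    (1 / (2 * (⨆ j, ∑ i, |A i j|) ^ 2)) * ∑ j, (A.mulVec x j - b j) ^ 2

/-- `F*_τ = min{F_τ(x) : 0 ≤ x ≤ u}`. -/
noncomputable def Fstar {m n : ℕ} (A : Matrix (Fin m) (Fin n) ℝ) (b : Fin m → ℝ)
    (u chat : Fin n → ℝ) (τ : ℝ) : ℝ :=
  sInf {v : ℝ | ∃ x : Fin n → ℝ, 0 ≤ x ∧ x ≤ u ∧ v = Ftau A b chat τ x}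

/-- `α(x) = max{0, ⟨ĉ,x⟩ − τ}`. -/
noncomputable def alphaF {n : ℕ} (chat : Fin n → ℝ) (τ : ℝ) (x : Fin n → ℝ) : ℝ :=
  max 0 ((∑ i, chat i * x i) - τ)

/-- `β(x) = ‖Ax − b‖₂ / ‖A‖₁`. -/
noncomputable def betaF {m n : ℕ} (A : Matrix (Fin m) (Fin n) ℝ) (b : Fin m → ℝ)
    (x : Fin n → ℝ) : ℝ :=
  Real.sqrt (∑ j, (A.mulVec x j - b j) ^ 2) / (⨆ j, ∑ i, |A i j|)



lemma ftau_cont {m n : ℕ} (A : Matrix (Fin m) (Fin n) ℝ) (b : Fin m → ℝ)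
    (chat : Fin n → ℝ) (τ : ℝ) : Continuous (fun x => Ftau A b chat τ x) := by
  unfold Ftau
  apply Continuous.add
  · apply Continuous.mul continuous_const
    apply Continuous.pow
    apply Continuous.max continuous_const
    apply Continuous.sub _ continuous_const
    exact continuous_finset_sum _ (fun i _ => continuous_const.mul (continuous_apply i))
  · apply Continuous.mul continuous_const
    apply continuous_finset_sum _ (fun j _ => ?_)
    apply Continuous.pow
    apply Continuous.sub _ continuous_const
    simp only [Matrix.mulVec, dotProduct]
    exact continuous_finset_sum _ (fun i _ => continuous_const.mul (continuous_apply i))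

lemma ftau_nonneg {m n : ℕ} (A : Matrix (Fin m) (Fin n) ℝ) (b : Fin m → ℝ)
    (chat : Fin n → ℝ) (τ : ℝ) (x : Fin n → ℝ) : 0 ≤ Ftau A b chat τ x := by
  unfold Ftau
  have h1 : (0:ℝ) ≤ (1 / (2 * (⨆ j, ∑ i, |A i j|) ^ 2)) := by positivity
  have h2 : (0:ℝ) ≤ ∑ j, (A.mulVec x j - b j) ^ 2 :=
    Finset.sum_nonneg fun j _ => sq_nonneg _
  positivity

lemma ftau_min {m n : ℕ} (A : Matrix (Fin m) (Fin n) ℝ) (b : Fin m → ℝ)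
    (u chat : Fin n → ℝ) (hu : 0 ≤ u) (τ : ℝ) :
    ∃ x : Fin n → ℝ, 0 ≤ x ∧ x ≤ u ∧
      ∀ y : Fin n → ℝ, 0 ≤ y → y ≤ u → Ftau A b chat τ x ≤ Ftau A b chat τ y := by
  obtain ⟨x, hx, hmin⟩ := (isCompact_Icc (a := (0 : Fin n → ℝ)) (b := u)).exists_isMinOn
    (Set.nonempty_Icc.2 hu) (ftau_cont A b chat τ).continuousOn
  exact ⟨x, hx.1, hx.2, fun y h1 h2 => hmin (Set.mem_Icc.2 ⟨h1, h2⟩)⟩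


lemma fstar_eq {m n : ℕ} (A : Matrix (Fin m) (Fin n) ℝ) (b : Fin m → ℝ)
    (u chat : Fin n → ℝ) (hu : 0 ≤ u) (τ : ℝ) :
    ∃ x : Fin n → ℝ, 0 ≤ x ∧ x ≤ u ∧ Fstar A b u chat τ = Ftau A b chat τ x ∧
      ∀ y : Fin n → ℝ, 0 ≤ y → y ≤ u → Ftau A b chat τ x ≤ Ftau A b chat τ y := by
  obtain ⟨x, hx1, hx2, hmin⟩ := ftau_min A b u chat hu τ
  refine ⟨x, hx1, hx2, ?_, hmin⟩
  apply le_antisymm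
  · exact csInf_le ⟨0, fun v ⟨y, _, _, hv⟩ => hv ▸ ftau_nonneg A b chat τ y⟩
      ⟨x, hx1, hx2, rfl⟩
  · exact le_csInf ⟨_, x, hx1, hx2, rfl⟩ (fun v ⟨y, h1, h2, hv⟩ => hv ▸ hmin y h1 h2)

lemma fstar_le {m n : ℕ} (A : Matrix (Fin m) (Fin n) ℝ) (b : Fin m → ℝ)
    (u chat : Fin n → ℝ) (τ : ℝ) (x : Fin n → ℝ) (h1 : 0 ≤ x) (h2 : x ≤ u) :
    Fstar A b u chat τ ≤ Ftau A b chat τ x :=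
  csInf_le ⟨0, fun v ⟨y, _, _, hv⟩ => hv ▸ ftau_nonneg A b chat τ y⟩ ⟨x, h1, h2, rfl⟩

lemma fstar_nonneg {m n : ℕ} (A : Matrix (Fin m) (Fin n) ℝ) (b : Fin m → ℝ)
    (u chat : Fin n → ℝ) (hu : 0 ≤ u) (τ : ℝ) : 0 ≤ Fstar A b u chat τ := by
  obtain ⟨x, _, _, hx, _⟩ := fstar_eq A b u chat hu τ
  exact hx ▸ ftau_nonneg A b chat τ x

lemma sum_abs_bound {n : ℕ} (chat u x : Fin n → ℝ) (h1 : 0 ≤ x) (h2 : x ≤ u) :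
    |∑ i, chat i * x i| ≤ ∑ i, |chat i| * u i := by
  calc |∑ i, chat i * x i| ≤ ∑ i, |chat i * x i| := Finset.abs_sum_le_sum_abs _ _
    _ ≤ ∑ i, |chat i| * u i := by
        apply Finset.sum_le_sum fun i _ => ?_
        rw [abs_mul, abs_of_nonneg (h1 i)]
        exact mul_le_mul_of_nonneg_left (h2 i) (abs_nonneg _)

lemma ftau_diff {m n : ℕ} (A : Matrix (Fin m) (Fin n) ℝ) (b : Fin m → ℝ)
    (u chat : Fin n → ℝ) (τ τ' : ℝ) (x : Fin n → ℝ) (h1 : 0 ≤ x) (h2 : x ≤ u) :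
    Ftau A b chat τ' x ≤ Ftau A b chat τ x +
      ((∑ i, |chat i| * u i) + |τ| + |τ'|) * |τ - τ'| := by
  set M := ∑ i, |chat i| * u i with hM
  have hM0 : 0 ≤ M := Finset.sum_nonneg fun i _ =>
    mul_nonneg (abs_nonneg _) ((h1 i).trans (h2 i))
  set s := ∑ i, chat i * x i with hs
  have hsM : |s| ≤ M := sum_abs_bound chat u x h1 h2
  set a := max 0 (s - τ) with ha
  set a' := max 0 (s - τ') with ha'
  have ha0 : 0 ≤ a := le_max_left _ _
  have ha0' : 0 ≤ a' := le_max_left _ _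
  have haub : a ≤ M + |τ| := max_le (by positivity)
    (by have := abs_le.1 hsM; have := neg_abs_le τ; linarith [le_abs_self s, neg_le_abs τ])
  have haub' : a' ≤ M + |τ'| := max_le (by positivity)
    (by have := abs_le.1 hsM; linarith [neg_le_abs τ'])
  have hdiff : |a' - a| ≤ |τ - τ'| := by
    rw [ha, ha']
    calc |max 0 (s - τ') - max 0 (s - τ)| = |max (s - τ') 0 - max (s - τ) 0| := by
          rw [max_comm 0, max_comm 0]
      _ ≤ |(s - τ') - (s - τ)| := abs_max_sub_max_le_abs _ _ _
      _ = |τ - τ'| := by ring_nf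
  have key : (1/2) * a' ^ 2 ≤ (1/2) * a ^ 2 + (M + |τ| + |τ'|) * |τ - τ'| := by
    have h := abs_le.1 hdiff
    nlinarith [mul_le_mul_of_nonneg_right h.2 (by linarith : (0:ℝ) ≤ a + a'),
      mul_le_mul_of_nonneg_left (show a + a' ≤ 2*M + |τ| + |τ'| by linarith)
        (abs_nonneg (τ - τ')),
      mul_nonneg (abs_nonneg (τ - τ')) (show (0:ℝ) ≤ |τ| + |τ'| by positivity)]
  unfold Ftau
  rw [← hs, ← ha, ← ha']
  linarith

lemma fstar_diff {m n : ℕ} (A : Matrix (Fin m) (Fin n) ℝ) (b : Fin m → ℝ)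
    (u chat : Fin n → ℝ) (hu : 0 ≤ u) (τ τ' : ℝ) :
    Fstar A b u chat τ' ≤ Fstar A b u chat τ +
      ((∑ i, |chat i| * u i) + |τ| + |τ'|) * |τ - τ'| := by
  obtain ⟨x, h1, h2, heq, _⟩ := fstar_eq A b u chat hu τ
  calc Fstar A b u chat τ' ≤ Ftau A b chat τ' x := fstar_le A b u chat τ' x h1 h2
    _ ≤ Ftau A b chat τ x + ((∑ i, |chat i| * u i) + |τ| + |τ'|) * |τ - τ'| :=
        ftau_diff A b u chat τ τ' x h1 h2
    _ = _ := by rw [heq]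

lemma fstar_cont {m n : ℕ} (A : Matrix (Fin m) (Fin n) ℝ) (b : Fin m → ℝ)
    (u chat : Fin n → ℝ) (hu : 0 ≤ u) :
    Continuous (fun τ : ℝ => Fstar A b u chat τ) := by
  set M := ∑ i, |chat i| * u i with hM
  have hM0 : 0 ≤ M := Finset.sum_nonneg fun i _ => mul_nonneg (abs_nonneg _) (hu i)
  rw [Metric.continuous_iff]
  intro τ ε hε
  set C := M + 2 * |τ| + 2 with hC
  have hC0 : 0 < C := by positivity
  refine ⟨min 1 (ε / C), lt_min one_pos (div_pos hε hC0), fun τ' hd => ?_⟩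
  rw [Real.dist_eq] at hd ⊢
  have hd1 : |τ' - τ| < 1 := lt_of_lt_of_le hd (min_le_left _ _)
  have hd2 : |τ' - τ| < ε / C := lt_of_lt_of_le hd (min_le_right _ _)
  have hτ' : |τ'| ≤ |τ| + 1 := by
    have := abs_sub_abs_le_abs_sub τ' τ
    linarith
  have hb1 := fstar_diff A b u chat hu τ τ'
  have hb2 := fstar_diff A b u chat hu τ' τ
  rw [← hM] at hb1 hb2
  have habs : |τ - τ'| = |τ' - τ| := abs_sub_comm _ _
  have hK : M + |τ| + |τ'| ≤ C := by rw [hC]; linarith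
  have hprod : (M + |τ| + |τ'|) * |τ - τ'| < ε := by
    rw [habs]
    calc (M + |τ| + |τ'|) * |τ' - τ| ≤ C * |τ' - τ| :=
          mul_le_mul_of_nonneg_right hK (abs_nonneg _)
      _ < C * (ε / C) := by
          rcases eq_or_lt_of_le (abs_nonneg (τ' - τ)) with h0 | h0
          · rw [← h0, mul_zero]; positivity
          · exact (mul_lt_mul_iff_right₀ hC0).2 hd2
      _ = ε := by field_simp
  have hprod' : (M + |τ'| + |τ|) * |τ' - τ| < ε := by
    have : (M + |τ'| + |τ|) * |τ' - τ| = (M + |τ| + |τ'|) * |τ - τ'| := by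
      rw [habs]; ring
    linarith
  rw [abs_sub_lt_iff]
  constructor <;> linarith

lemma fstar_antitone {m n : ℕ} (A : Matrix (Fin m) (Fin n) ℝ) (b : Fin m → ℝ)
    (u chat : Fin n → ℝ) (hu : 0 ≤ u) :
    Antitone (fun τ : ℝ => Fstar A b u chat τ) := by
  intro τ τ' hle
  obtain ⟨x, h1, h2, heq, _⟩ := fstar_eq A b u chat hu τ
  calc Fstar A b u chat τ' ≤ Ftau A b chat τ' x := fstar_le A b u chat τ' x h1 h2
    _ ≤ Ftau A b chat τ x := by
        unfold Ftau
        have : max 0 ((∑ i, chat i * x i) - τ') ≤ max 0 ((∑ i, chat i * x i) - τ) :=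
          max_le_max le_rfl (by linarith)
        have h0 : (0:ℝ) ≤ max 0 ((∑ i, chat i * x i) - τ') := le_max_left _ _
        nlinarith [pow_le_pow_left₀ h0 this 2]
    _ = Fstar A b u chat τ := heq.symm


lemma philp_bdd {m n : ℕ} (A : Matrix (Fin m) (Fin n) ℝ) (b : Fin m → ℝ)
    (chat u : Fin n → ℝ) :
    BddBelow {v : ℝ | ∃ x : Fin n → ℝ, A.mulVec x = b ∧ 0 ≤ x ∧ x ≤ u ∧
      v = ∑ i, chat i * x i} := by
  refine ⟨-(∑ i, |chat i| * u i), fun v ⟨x, _, h1, h2, hv⟩ => ?_⟩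
  have := sum_abs_bound chat u x h1 h2
  rw [hv]
  linarith [(abs_le.1 this).1]

lemma lp_min {m n : ℕ} (A : Matrix (Fin m) (Fin n) ℝ) (b : Fin m → ℝ)
    (u chat : Fin n → ℝ)
    (hfeas : ∃ x : Fin n → ℝ, A.mulVec x = b ∧ 0 ≤ x ∧ x ≤ u) :
    ∃ x : Fin n → ℝ, A.mulVec x = b ∧ 0 ≤ x ∧ x ≤ u ∧
      PhiLP A b chat u = ∑ i, chat i * x i ∧
      ∀ y : Fin n → ℝ, A.mulVec y = b → 0 ≤ y → y ≤ u →
        ∑ i, chat i * x i ≤ ∑ i, chat i * y i := by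
  obtain ⟨z, hz1, hz2, hz3⟩ := hfeas
  set K : Set (Fin n → ℝ) := {x | A.mulVec x = b} ∩ Set.Icc 0 u with hK
  have hKc : IsCompact K := by
    apply (isCompact_Icc (a := (0:Fin n → ℝ)) (b := u)).of_isClosed_subset
    · apply IsClosed.inter _ isClosed_Icc
      have : Continuous fun x : Fin n → ℝ => A.mulVec x :=
        LinearMap.continuous_of_finiteDimensional A.mulVecLin
      exact isClosed_eq this continuous_const
    · exact Set.inter_subset_right
  have hKne : K.Nonempty := ⟨z, hz1, Set.mem_Icc.2 ⟨hz2, hz3⟩⟩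
  have hcont : Continuous fun x : Fin n → ℝ => ∑ i, chat i * x i :=
    continuous_finset_sum _ fun i _ => continuous_const.mul (continuous_apply i)
  obtain ⟨x, hx, hmin⟩ := hKc.exists_isMinOn hKne hcont.continuousOn
  obtain ⟨hxb, hx1, hx2⟩ : A.mulVec x = b ∧ 0 ≤ x ∧ x ≤ u :=
    ⟨hx.1, (Set.mem_Icc.1 hx.2).1, (Set.mem_Icc.1 hx.2).2⟩
  refine ⟨x, hxb, hx1, hx2, ?_, fun y hy1 hy2 hy3 => hmin ⟨hy1, Set.mem_Icc.2 ⟨hy2, hy3⟩⟩⟩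
  apply le_antisymm
  · exact csInf_le (philp_bdd A b chat u) ⟨x, hxb, hx1, hx2, rfl⟩
  · exact le_csInf ⟨_, x, hxb, hx1, hx2, rfl⟩
      (fun v ⟨y, hy1, hy2, hy3, hv⟩ => hv ▸ hmin ⟨hy1, Set.mem_Icc.2 ⟨hy2, hy3⟩⟩)

lemma fstar_isleast {m n : ℕ} (A : Matrix (Fin m) (Fin n) ℝ) (b : Fin m → ℝ)
    (u chat : Fin n → ℝ) (hu : 0 ≤ u) (hA : 0 < ⨆ j, ∑ i, |A i j|)
    (hfeas : ∃ x : Fin n → ℝ, A.mulVec x = b ∧ 0 ≤ x ∧ x ≤ u) :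
    IsLeast {τ : ℝ | Fstar A b u chat τ = 0} (PhiLP A b chat u) := by
  obtain ⟨x₀, hb0, h01, h02, hPhi, hmin0⟩ := lp_min A b u chat hfeas
  constructor
  · -- Fstar at Φ is 0
    have hF : Ftau A b chat (PhiLP A b chat u) x₀ = 0 := by
      unfold Ftau
      rw [hb0, hPhi]
      simp
    have h1 := fstar_le A b u chat (PhiLP A b chat u) x₀ h01 h02
    have h2 := fstar_nonneg A b u chat hu (PhiLP A b chat u)
    rw [hF] at h1
    exact le_antisymm h1 h2
  · intro τ hτ
    obtain ⟨x, hx1, hx2, heq, _⟩ := fstar_eq A b u chat hu τ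
    have hF0 : Ftau A b chat τ x = 0 := by rw [← heq]; exact hτ
    unfold Ftau at hF0
    have ht1 : (0:ℝ) ≤ (1 / 2) * (max 0 ((∑ i, chat i * x i) - τ)) ^ 2 := by positivity
    have hsum : (0:ℝ) ≤ ∑ j, (A.mulVec x j - b j) ^ 2 :=
      Finset.sum_nonneg fun j _ => sq_nonneg _
    have hcoef : (0:ℝ) < 1 / (2 * (⨆ j, ∑ i, |A i j|) ^ 2) := by positivity
    have ht2 : (0:ℝ) ≤ (1 / (2 * (⨆ j, ∑ i, |A i j|) ^ 2)) *
        ∑ j, (A.mulVec x j - b j) ^ 2 := mul_nonneg hcoef.le hsum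
    have hterm1 : (1 / 2) * (max 0 ((∑ i, chat i * x i) - τ)) ^ 2 = 0 := by linarith
    have hterm2 : (1 / (2 * (⨆ j, ∑ i, |A i j|) ^ 2)) *
        ∑ j, (A.mulVec x j - b j) ^ 2 = 0 := by linarith
    have hmax : max 0 ((∑ i, chat i * x i) - τ) = 0 := by
      have := pow_eq_zero_iff (n := 2) (by norm_num) |>.1 (by linarith : (max 0 ((∑ i, chat i * x i) - τ)) ^ 2 = 0)
      exact this
    have hle : (∑ i, chat i * x i) ≤ τ := by
      by_contra h
      push_neg at h
      have : max 0 ((∑ i, chat i * x i) - τ) = (∑ i, chat i * x i) - τ :=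
        max_eq_right (by linarith)
      rw [this] at hmax
      linarith
    have hsum0 : ∑ j, (A.mulVec x j - b j) ^ 2 = 0 := by
      by_contra h
      have : (0:ℝ) < ∑ j, (A.mulVec x j - b j) ^ 2 := lt_of_le_of_ne hsum (Ne.symm h)
      nlinarith
    have hAxb : A.mulVec x = b := by
      funext j
      have hj : (A.mulVec x j - b j) ^ 2 = 0 := by
        have := (Finset.sum_eq_zero_iff_of_nonneg (fun j _ => sq_nonneg _)).1 hsum0 j
          (Finset.mem_univ j)
        exact this
      have := pow_eq_zero_iff (n := 2) (by norm_num) |>.1 hj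
      linarith
    calc PhiLP A b chat u ≤ ∑ i, chat i * x i :=
          csInf_le (philp_bdd A b chat u) ⟨x, hAxb, hx1, hx2, rfl⟩
      _ ≤ τ := hle

/-- `τ ↦ F*_τ` is non-increasing and continuous; and if
`Ax = b, 0 ≤ x ≤ u` is feasible, then `Φ(A,b,ĉ,u)` is the smallest `τ` with
`F*_τ = 0`. -/
theorem Fstar_monotone_continuous_and_min {m n : ℕ} (A : Matrix (Fin m) (Fin n) ℝ)
    (b : Fin m → ℝ) (u : Fin n → ℝ) (hu : 0 ≤ u)
    (hA : 0 < ⨆ j, ∑ i, |A i j|) (chat : Fin n → ℝ) :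
    Antitone (fun τ : ℝ => Fstar A b u chat τ) ∧
    Continuous (fun τ : ℝ => Fstar A b u chat τ) ∧
    ((∃ x : Fin n → ℝ, A.mulVec x = b ∧ 0 ≤ x ∧ x ≤ u) →
      IsLeast {τ : ℝ | Fstar A b u chat τ = 0} (PhiLP A b chat u)) :=
  ⟨fstar_antitone A b u chat hu, fstar_cont A b u chat hu,
    fun hfeas => fstar_isleast A b u chat hu hA hfeas⟩
end
end

section
/- Let A ∈ ℝ^{m×n} with ‖A‖₁ > 0, b ∈ ℝ^m, u ∈ ℝ^n with u ≥ 0, ĉ ∈ ℝ^n, ζ > 0, and let C̄ ≥ 3 be a constant. If F*_τ ≤ C̄²·ζ for some τ ∈ ℝ, then F*_{τ − C̄√ζ/2} ≤ (2C̄² − 1)·ζ. -/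
open BigOperators Finset

noncomputable section

open Classical

private lemma key_arith (c r a F : ℝ) (hc : 3 ≤ c) (hr : 0 < r) (ha : 0 ≤ a)
    (ha2 : a ^ 2 ≤ 2 * c ^ 2 * r ^ 2 + r ^ 2 / 5)
    (hF : F < c ^ 2 * r ^ 2 + r ^ 2 / 10) :
    F + (c * r / 2) * a + (c * r / 2) ^ 2 / 2 ≤ (2 * c ^ 2 - 1) * r ^ 2 := by
  have h9 : (9:ℝ) ≤ c ^ 2 := by nlinarith
  have hb0 : 0 ≤ (7/4 * c ^ 2 - 11/5) * r ^ 2 :=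
    mul_nonneg (by linarith) (sq_nonneg r)
  have ha0 : 0 ≤ c * r * a := by positivity
  have hsq2 : (c * r * a) ^ 2 ≤ ((7/4 * c ^ 2 - 11/5) * r ^ 2) ^ 2 := by
    have hpoly : c ^ 2 * (2 * c ^ 2 + 1/5) ≤ (7/4 * c ^ 2 - 11/5) ^ 2 := by
      nlinarith [sq_nonneg (c - 3), sq_nonneg (c ^ 2 - 9), sq_nonneg c]
    nlinarith [sq_nonneg r, sq_nonneg (r ^ 2), mul_le_mul_of_nonneg_left ha2 (sq_nonneg c),
      mul_nonneg (sq_nonneg c) (sq_nonneg r), sq_nonneg (c * r)]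
  have hprod : c * r * a ≤ (7/4 * c ^ 2 - 11/5) * r ^ 2 := by
    nlinarith [hsq2, ha0, hb0]
  nlinarith [hprod, hF]

/-- For `ζ > 0` and a constant `C̄ ≥ 3`, if `F*_τ ≤ C̄²ζ`, then
`F*_{τ − C̄√ζ/2} ≤ (2C̄² − 1)ζ`. -/
theorem Fstar_lipschitz_shift {m n : ℕ} (A : Matrix (Fin m) (Fin n) ℝ)
    (b : Fin m → ℝ) (u : Fin n → ℝ) (hu : 0 ≤ u)
    (hA : 0 < ⨆ j, ∑ i, |A i j|) (chat : Fin n → ℝ)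
    (ζ : ℝ) (hζ : 0 < ζ) (Cbar : ℝ) (hCbar : 3 ≤ Cbar) (τ : ℝ)
    (hFτ : Fstar A b u chat τ ≤ Cbar ^ 2 * ζ) :
    Fstar A b u chat (τ - Cbar * Real.sqrt ζ / 2) ≤ (2 * Cbar ^ 2 - 1) * ζ := by

  set M := ⨆ j, ∑ i, |A i j| with hM
  -- nonnegativity of Ftau
  have hFnn : ∀ τ' (x : Fin n → ℝ), 0 ≤ Ftau A b chat τ' x := by
    intro τ' x
    unfold Ftau
    have h1 : (0:ℝ) ≤ (1 / 2) * (max 0 ((∑ i, chat i * x i) - τ')) ^ 2 := by positivity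
    have h2 : (0:ℝ) ≤ (1 / (2 * M ^ 2)) * ∑ j, (A.mulVec x j - b j) ^ 2 := by
      apply mul_nonneg
      · positivity
      · exact Finset.sum_nonneg fun j _ => sq_nonneg _
    exact add_nonneg h1 h2
  have hbdd : ∀ τ', BddBelow {v : ℝ | ∃ x : Fin n → ℝ, 0 ≤ x ∧ x ≤ u ∧ v = Ftau A b chat τ' x} := by
    intro τ'
    refine ⟨0, ?_⟩
    rintro v ⟨x, -, -, rfl⟩
    exact hFnn τ' x
  have hne : ∀ τ', ({v : ℝ | ∃ x : Fin n → ℝ, 0 ≤ x ∧ x ≤ u ∧ v = Ftau A b chat τ' x}).Nonempty := by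
    intro τ'
    exact ⟨Ftau A b chat τ' 0, 0, le_refl _, hu, rfl⟩
  -- get a near-minimizer for τ
  have hlt : Fstar A b u chat τ < Cbar ^ 2 * ζ + ζ / 10 := lt_of_le_of_lt hFτ (by linarith)
  obtain ⟨v, ⟨x, hx0, hxu, rfl⟩, hvlt⟩ := exists_lt_of_csInf_lt (hne τ) hlt
  have hstep : Fstar A b u chat (τ - Cbar * Real.sqrt ζ / 2) ≤
      Ftau A b chat (τ - Cbar * Real.sqrt ζ / 2) x :=
    csInf_le (hbdd _) ⟨x, hx0, hxu, rfl⟩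
  refine hstep.trans ?_
  -- notation
  set r := Real.sqrt ζ with hr
  have hr0 : 0 < r := Real.sqrt_pos.mpr hζ
  have hr2 : r ^ 2 = ζ := Real.sq_sqrt hζ.le
  set s := ∑ i, chat i * x i with hs
  set α := max 0 (s - τ) with hα
  set Q := (1 / (2 * M ^ 2)) * ∑ j, (A.mulVec x j - b j) ^ 2 with hQ
  have hQ0 : 0 ≤ Q := by
    apply mul_nonneg
    · positivity
    · exact Finset.sum_nonneg fun j _ => sq_nonneg _
  have hα0 : 0 ≤ α := le_max_left _ _
  have hδ0 : 0 ≤ Cbar * r / 2 := by positivity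
  have hFx : Ftau A b chat τ x = (1/2) * α ^ 2 + Q := rfl
  have hF'x : Ftau A b chat (τ - Cbar * r / 2) x =
      (1/2) * (max 0 (s - τ + Cbar * r / 2)) ^ 2 + Q := by
    have h : (∑ i, chat i * x i) - (τ - Cbar * r / 2) = s - τ + Cbar * r / 2 := by
      rw [hs]; ring
    unfold Ftau
    rw [h]
  have hmax : max 0 (s - τ + Cbar * r / 2) ≤ α + Cbar * r / 2 := by
    apply max_le
    · linarith
    · have : s - τ ≤ α := le_max_right _ _
      linarith
  have hmax0 : 0 ≤ max 0 (s - τ + Cbar * r / 2) := le_max_left _ _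
  have hsq : (max 0 (s - τ + Cbar * r / 2)) ^ 2 ≤ (α + Cbar * r / 2) ^ 2 :=
    pow_le_pow_left₀ hmax0 hmax 2
  have hkey : Ftau A b chat (τ - Cbar * r / 2) x ≤
      Ftau A b chat τ x + (Cbar * r / 2) * α + (Cbar * r / 2) ^ 2 / 2 := by
    rw [hF'x, hFx]
    nlinarith [hsq]
  refine hkey.trans ?_
  -- numeric estimates
  have hαsq : α ^ 2 ≤ 2 * (Ftau A b chat τ x) := by
    rw [hFx]; linarith
  have hF : Ftau A b chat τ x < Cbar ^ 2 * ζ + ζ / 10 := hvlt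
  have hα2 : α ^ 2 ≤ 2 * Cbar ^ 2 * r ^ 2 + r ^ 2 / 5 := by
    rw [hr2]; nlinarith
  have hFr : Ftau A b chat τ x < Cbar ^ 2 * r ^ 2 + r ^ 2 / 10 := by rw [hr2]; exact hF
  rw [← hr2]
  exact key_arith Cbar r α (Ftau A b chat τ x) hCbar hr0 hα0 hα2 hFr
end
end

section
/- Let A ∈ ℝ^{m×n} with ‖A‖₁ > 0, b ∈ ℝ^m, u ∈ ℝ^n with u ≥ 0, c ∈ ℝ^n with c ≠ 0, ε > 0, and set σ := 2ε‖c‖_∞. Let ĉ ∈ ℝ^n satisfy ‖ĉ‖_∞ ≤ 1 and |ĉ_i − c_i/‖c‖_∞| ≤ ε for all i. Let ζ > 0, τ ∈ ℝ, and let x be a ζ-approximate minimizer of F_τ such that ε·α(x) ≥ 4√ζ. Define π := (‖c‖_∞/(‖A‖₁²·α(x)))·(b − Ax). Then θ(x, π, σ) := Σ_{i : c_i − A_i^⊤π > σ} x_i + Σ_{i : c_i − A_i^⊤π < −σ} (u_i − x_i) ≤ n√ζ/2. -/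
open BigOperators Finset

noncomputable section

open Classical

lemma Fstar_le' {m n : ℕ} (A : Matrix (Fin m) (Fin n) ℝ) (b : Fin m → ℝ)
    (u chat : Fin n → ℝ) (τ : ℝ) (y : Fin n → ℝ) (hy0 : 0 ≤ y) (hyu : y ≤ u) :
    Fstar A b u chat τ ≤ Ftau A b chat τ y := by
  apply csInf_le
  · refine ⟨0, ?_⟩
    rintro v ⟨z, _, _, rfl⟩
    simp only [Ftau]
    positivity
  · exact ⟨y, hy0, hyu, rfl⟩

lemma Ftau_update' {m n : ℕ} (A : Matrix (Fin m) (Fin n) ℝ) (b : Fin m → ℝ)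
    (chat : Fin n → ℝ) (τ : ℝ) (x : Fin n → ℝ) (i : Fin n) (t : ℝ)
    (hL : 0 < ⨆ j, ∑ i, |A i j|)
    (hchi : (chat i) ^ 2 ≤ 1)
    (hcol : ∑ j, (A j i) ^ 2 ≤ (⨆ j, ∑ i, |A i j|) ^ 2) :
    Ftau A b chat τ (Function.update x i (x i + t)) ≤
      Ftau A b chat τ x +
        t * ((max 0 ((∑ k, chat k * x k) - τ)) * chat i +
          (1 / (⨆ j, ∑ i, |A i j|) ^ 2) * ∑ j, A j i * (A.mulVec x j - b j)) + t ^ 2 := by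
  simp only [Ftau]
  set L := (⨆ j, ∑ i, |A i j| : ℝ) with hLdef
  set y := Function.update x i (x i + t) with hy
  set S := (∑ k, chat k * x k : ℝ) with hSdef
  set α := max 0 (S - τ) with hα
  set s := (∑ j, A j i * (A.mulVec x j - b j) : ℝ) with hs
  set P := (∑ j, (A j i) ^ 2 : ℝ) with hP
  set R := (∑ j, (A.mulVec x j - b j) ^ 2 : ℝ) with hR
  have hyk : ∀ k, y k = x k + (if k = i then t else 0) := by
    intro k
    by_cases h : k = i
    · subst h; simp [hy]
    · simp [hy, Function.update_of_ne h, h]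
  have hS' : ∑ k, chat k * y k = S + chat i * t := by
    have h1 : ∀ k ∈ Finset.univ, chat k * y k
        = chat k * x k + (if k = i then chat i * t else 0) := by
      intro k _
      rw [hyk k]
      by_cases h : k = i
      · subst h; simp; ring
      · simp [h]
    rw [Finset.sum_congr rfl h1, Finset.sum_add_distrib, Finset.sum_ite_eq' Finset.univ i]
    simp [hSdef]
  have hmv : ∀ j, A.mulVec y j = A.mulVec x j + A j i * t := by
    intro j
    simp only [Matrix.mulVec, dotProduct]
    have h1 : ∀ k ∈ Finset.univ, A j k * y k
        = A j k * x k + (if k = i then A j i * t else 0) := by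
      intro k _
      rw [hyk k]
      by_cases h : k = i
      · subst h; simp; ring
      · simp [h]
    rw [Finset.sum_congr rfl h1, Finset.sum_add_distrib, Finset.sum_ite_eq' Finset.univ i]
    simp
  have hsum2 : ∑ j, (A.mulVec y j - b j) ^ 2 = R + 2 * t * s + t ^ 2 * P := by
    have h1 : ∀ j ∈ Finset.univ, (A.mulVec y j - b j) ^ 2 =
        (A.mulVec x j - b j) ^ 2 + 2 * t * (A j i * (A.mulVec x j - b j))
          + t ^ 2 * (A j i) ^ 2 := by
      intro j _; rw [hmv j]; ring
    rw [Finset.sum_congr rfl h1, Finset.sum_add_distrib, Finset.sum_add_distrib,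
      ← Finset.mul_sum, ← Finset.mul_sum]
  have hL2 : (0:ℝ) < L ^ 2 := by positivity
  have e2 : (1 / (2 * L ^ 2)) * (t ^ 2 * P) ≤ t ^ 2 / 2 := by
    have h2 : t ^ 2 * P ≤ t ^ 2 * L ^ 2 := mul_le_mul_of_nonneg_left hcol (sq_nonneg t)
    have h3 : (1 / (2 * L ^ 2)) * (t ^ 2 * L ^ 2) = t ^ 2 / 2 := by field_simp
    calc (1 / (2 * L ^ 2)) * (t ^ 2 * P) ≤ (1 / (2 * L ^ 2)) * (t ^ 2 * L ^ 2) :=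
          mul_le_mul_of_nonneg_left h2 (by positivity)
      _ = t ^ 2 / 2 := h3
  have e3 : (max 0 (S + chat i * t - τ)) ^ 2 ≤ (α + chat i * t) ^ 2 := by
    have ha : max 0 (S + chat i * t - τ) ≤ max 0 (α + chat i * t) :=
      max_le_max le_rfl (by have := le_max_right (0:ℝ) (S - τ); rw [← hα] at this; linarith)
    have hb : (max 0 (α + chat i * t)) ^ 2 ≤ (α + chat i * t) ^ 2 := by
      rcases le_or_gt (α + chat i * t) 0 with h | h
      · rw [max_eq_left h]; nlinarith
      · rw [max_eq_right h.le]
    calc (max 0 (S + chat i * t - τ)) ^ 2 ≤ (max 0 (α + chat i * t)) ^ 2 :=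
          pow_le_pow_left₀ (le_max_left _ _) ha 2
      _ ≤ (α + chat i * t) ^ 2 := hb
  have e4 : t ^ 2 * (chat i) ^ 2 ≤ t ^ 2 := by nlinarith [sq_nonneg t]
  have e1 : (1 / (2 * L ^ 2)) * (R + 2 * t * s + t ^ 2 * P) =
      (1 / (2 * L ^ 2)) * R + t * ((1 / L ^ 2) * s) + (1 / (2 * L ^ 2)) * (t ^ 2 * P) := by
    field_simp
  rw [hS', hsum2, e1]
  nlinarith [e2, e3, e4]


set_option maxHeartbeats 1000000 in
/-- With `σ = 2ε‖c‖_∞`, `ĉ` an `ε`-accurate rounding of `c/‖c‖_∞` with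
`‖ĉ‖_∞ ≤ 1`, `x` a `ζ`-approximate minimizer of `F_τ` satisfying `ε·α(x) ≥ 4√ζ`, and
`π = (‖c‖_∞/(‖A‖₁²·α(x)))(b − Ax)`, one has `θ(x,π,σ) ≤ n√ζ/2`. -/
theorem theta_bound_from_potential {m n : ℕ} (A : Matrix (Fin m) (Fin n) ℝ)
    (hA : 0 < ⨆ j, ∑ i, |A i j|) (b : Fin m → ℝ) (u : Fin n → ℝ) (hu : 0 ≤ u)
    (c : Fin n → ℝ) (hc : c ≠ 0) (ε : ℝ) (hε : 0 < ε)
    (σ : ℝ) (hσ : σ = 2 * ε * ⨆ k, |c k|)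
    (chat : Fin n → ℝ) (hchat1 : (⨆ i, |chat i|) ≤ 1)
    (hchat2 : ∀ i, abs (chat i - c i / ⨆ k, |c k|) ≤ ε)
    (ζ : ℝ) (hζ : 0 < ζ) (τ : ℝ)
    (x : Fin n → ℝ) (hx0 : 0 ≤ x) (hxu : x ≤ u)
    (hxapprox : Ftau A b chat τ x ≤ Fstar A b u chat τ + ζ)
    (halpha : ε * alphaF chat τ x ≥ 4 * Real.sqrt ζ)
    (π : Fin m → ℝ)
    (hπ : π = fun j => ((⨆ k, |c k|) / ((⨆ j, ∑ i, |A i j|) ^ 2 * alphaF chat τ x)) *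
      (b j - A.mulVec x j)) :
    thetaLP A c u x π σ ≤ n * Real.sqrt ζ / 2 := by
  subst hσ hπ
  set L := (⨆ j, ∑ i, |A i j| : ℝ) with hLdef
  set CM := (⨆ k, |c k| : ℝ) with hCMdef
  set α := alphaF chat τ x with hαdef
  set sq := Real.sqrt ζ with hsqdef
  have hsq : 0 < sq := Real.sqrt_pos.mpr hζ
  have hsq2 : sq ^ 2 = ζ := Real.sq_sqrt hζ.le
  have hα : 0 < α := by
    by_contra h
    push_neg at h
    have : ε * α ≤ 0 := mul_nonpos_of_nonneg_of_nonpos hε.le h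
    nlinarith
  obtain ⟨k0, hk0⟩ := Function.ne_iff.mp hc
  have hCM : 0 < CM := by
    rw [hCMdef]
    exact lt_of_lt_of_le (abs_pos.mpr hk0)
      (le_ciSup (f := fun k => |c k|) (Set.Finite.bddAbove (Set.finite_range _)) k0)
  have hchisq : ∀ i, (chat i) ^ 2 ≤ 1 := by
    intro i
    have h1 : |chat i| ≤ 1 :=
      le_trans (le_ciSup (f := fun k => |chat k|) (Set.Finite.bddAbove (Set.finite_range _)) i)
        hchat1
    nlinarith [abs_nonneg (chat i), sq_abs (chat i)]
  have hcol : ∀ i, ∑ j, (A j i) ^ 2 ≤ L ^ 2 := by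
    intro i
    have h1 : ∑ j, |A j i| ≤ L := by
      rw [hLdef]
      exact le_ciSup (f := fun j => ∑ k, |A k j|) (Set.Finite.bddAbove (Set.finite_range _)) i
    have h0 : 0 ≤ ∑ j, |A j i| := Finset.sum_nonneg fun j _ => abs_nonneg _
    have h2 : ∑ j, (A j i) ^ 2 ≤ (∑ j, |A j i|) ^ 2 := by
      have h3 : ∀ j ∈ Finset.univ, (A j i) ^ 2 ≤ |A j i| * ∑ k, |A k i| := by
        intro j _
        have h4 : |A j i| ≤ ∑ k, |A k i| :=
          Finset.single_le_sum (fun k _ => abs_nonneg (A k i)) (Finset.mem_univ j)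
        calc (A j i) ^ 2 = |A j i| * |A j i| := by rw [← sq_abs]; ring
          _ ≤ |A j i| * ∑ k, |A k i| := mul_le_mul_of_nonneg_left h4 (abs_nonneg _)
      calc ∑ j, (A j i) ^ 2 ≤ ∑ j, |A j i| * ∑ k, |A k i| := Finset.sum_le_sum h3
        _ = (∑ j, |A j i|) ^ 2 := by rw [← Finset.sum_mul]; ring
    calc ∑ j, (A j i) ^ 2 ≤ (∑ j, |A j i|) ^ 2 := h2
      _ ≤ L ^ 2 := pow_le_pow_left₀ h0 h1 2
  -- rewrite the inner sums involving π
  have hsumπ : ∀ i : Fin n,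
      ∑ j, A j i * ((CM / (L ^ 2 * α)) * (b j - A.mulVec x j))
        = -((CM / (L ^ 2 * α)) * ∑ j, A j i * (A.mulVec x j - b j)) := by
    intro i
    have h1 : ∀ j ∈ Finset.univ,
        A j i * ((CM / (L ^ 2 * α)) * (b j - A.mulVec x j))
          = -((CM / (L ^ 2 * α)) * (A j i * (A.mulVec x j - b j))) := by
      intro j _; ring
    rw [Finset.sum_congr rfl h1, Finset.sum_neg_distrib, Finset.mul_sum]
  -- the descent machinery
  have hdescent : ∀ i : Fin n, ∀ t : ℝ, 0 ≤ x i + t → x i + t ≤ u i →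
      t * (α * chat i + (1 / L ^ 2) * ∑ j, A j i * (A.mulVec x j - b j)) ≤ -2 * ζ →
      t ^ 2 ≤ ζ / 4 → False := by
    intro i t hfeas0 hfeasu htg ht2
    have hF := Ftau_update' A b chat τ x i t hA (hchisq i) (hcol i)
    rw [← hLdef] at hF
    rw [show (max 0 ((∑ k, chat k * x k) - τ)) = α from rfl] at hF
    have hy0 : 0 ≤ Function.update x i (x i + t) := by
      intro k
      rcases eq_or_ne k i with h | h
      · subst h; simpa using hfeas0
      · simpa [Function.update_of_ne h] using hx0 k
    have hyu : Function.update x i (x i + t) ≤ u := by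
      intro k
      rcases eq_or_ne k i with h | h
      · subst h; simpa using hfeasu
      · simpa [Function.update_of_ne h] using hxu k
    have hfs := Fstar_le' A b u chat τ _ hy0 hyu
    linarith
  -- bounds on individual coordinates
  have hxb : ∀ i : Fin n,
      (c i - ∑ j, A j i * ((CM / (L ^ 2 * α)) * (b j - A.mulVec x j)) > 2 * ε * CM) →
      x i ≤ sq / 2 := by
    intro i hmem
    rw [hsumπ i] at hmem
    set D := (∑ j, A j i * (A.mulVec x j - b j) : ℝ) with hD
    have hmem' : 2 * ε * CM < c i + (CM / (L ^ 2 * α)) * D := by linarith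
    have hkey : (α / CM) * (c i + (CM / (L ^ 2 * α)) * D)
        = α * (c i / CM) + (1 / L ^ 2) * D := by
      field_simp
    have h2' : (α / CM) * (2 * ε * CM) < (α / CM) * (c i + (CM / (L ^ 2 * α)) * D) :=
      mul_lt_mul_of_pos_left hmem' (div_pos hα hCM)
    have h2'' : (α / CM) * (2 * ε * CM) = 2 * ε * α := by field_simp
    have h1' : c i / CM - ε ≤ chat i := by
      have := abs_le.mp (hchat2 i); linarith [this.1]
    have h4 : α * (c i / CM - ε) ≤ α * chat i := mul_le_mul_of_nonneg_left h1' hα.le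
    have hgi : 4 * sq < α * chat i + (1 / L ^ 2) * D := by nlinarith
    by_contra hxi
    push_neg at hxi
    refine hdescent i (-(sq / 2)) (by linarith) (by have := hxu i; simp at this ⊢; linarith) ?_ ?_
    · nlinarith [mul_lt_mul_of_pos_left hgi hsq]
    · nlinarith
  have hub : ∀ i : Fin n,
      (c i - ∑ j, A j i * ((CM / (L ^ 2 * α)) * (b j - A.mulVec x j)) < -(2 * ε * CM)) →
      u i - x i ≤ sq / 2 := by
    intro i hmem
    rw [hsumπ i] at hmem
    set D := (∑ j, A j i * (A.mulVec x j - b j) : ℝ) with hD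
    have hmem' : c i + (CM / (L ^ 2 * α)) * D < -(2 * ε * CM) := by linarith
    have hkey : (α / CM) * (c i + (CM / (L ^ 2 * α)) * D)
        = α * (c i / CM) + (1 / L ^ 2) * D := by
      field_simp
    have h2' : (α / CM) * (c i + (CM / (L ^ 2 * α)) * D) < (α / CM) * (-(2 * ε * CM)) :=
      mul_lt_mul_of_pos_left hmem' (div_pos hα hCM)
    have h2'' : (α / CM) * (-(2 * ε * CM)) = -(2 * ε * α) := by field_simp
    have h1' : chat i ≤ c i / CM + ε := by
      have := abs_le.mp (hchat2 i); linarith [this.2]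
    have h4 : α * chat i ≤ α * (c i / CM + ε) := mul_le_mul_of_nonneg_left h1' hα.le
    have hgi : α * chat i + (1 / L ^ 2) * D < -(4 * sq) := by nlinarith
    by_contra hxi
    push_neg at hxi
    refine hdescent i (sq / 2) (by have := hx0 i; simp at this ⊢; linarith) (by linarith) ?_ ?_
    · nlinarith [mul_lt_mul_of_pos_left hgi hsq]
    · nlinarith
  -- assemble
  simp only [thetaLP]
  set Sp := Finset.univ.filter (fun i : Fin n =>
    c i - ∑ j, A j i * ((CM / (L ^ 2 * α)) * (b j - A.mulVec x j)) > 2 * ε * CM) with hSp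
  set Sm := Finset.univ.filter (fun i : Fin n =>
    c i - ∑ j, A j i * ((CM / (L ^ 2 * α)) * (b j - A.mulVec x j)) < -(2 * ε * CM)) with hSm
  have h1 : ∑ i ∈ Sp, x i ≤ Sp.card • (sq / 2) :=
    Finset.sum_le_card_nsmul _ _ _ (fun i hi => hxb i (Finset.mem_filter.mp hi).2)
  have h2 : ∑ i ∈ Sm, (u i - x i) ≤ Sm.card • (sq / 2) :=
    Finset.sum_le_card_nsmul _ _ _ (fun i hi => hub i (Finset.mem_filter.mp hi).2)
  have hdisj : Disjoint Sp Sm := by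
    rw [Finset.disjoint_left]
    intro a ha hb
    rw [hSp, Finset.mem_filter] at ha
    rw [hSm, Finset.mem_filter] at hb
    have hσpos : (0:ℝ) < 2 * ε * CM := by positivity
    linarith [ha.2, hb.2]
  have hcard : Sp.card + Sm.card ≤ n := by
    calc Sp.card + Sm.card = (Sp ∪ Sm).card := (Finset.card_union_of_disjoint hdisj).symm
      _ ≤ (Finset.univ : Finset (Fin n)).card := Finset.card_le_univ _
      _ = n := Finset.card_fin n
  have hcard' : (Sp.card : ℝ) + (Sm.card : ℝ) ≤ (n : ℝ) := by exact_mod_cast hcard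
  have hprod : ((Sp.card : ℝ) + (Sm.card : ℝ)) * (sq / 2) ≤ (n : ℝ) * (sq / 2) :=
    mul_le_mul_of_nonneg_right hcard' (by positivity)
  rw [nsmul_eq_mul] at h1 h2
  linarith
end
end
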